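/- (Theorem 1, containment part.) Let P_s and P_t be probability measures on X with P_t absolutely continuous with respect to P_s, density ratio w = dP_t/dP_s satisfying 0 ≤ w(x) ≤ B for all x, and φ Bochner integrable with respect to P_t with μ_t = ∫ φ dP_t. Let x_1,…,x_{n_s} be i.i.d. from P_s and, independently, z_1,…,z_{n_t} be i.i.d. from P_t. For δ ∈ (0,1) set ε_{t'} = √M · ( √(B²/n_s + 1/n_t) + √(1/n_t) ) · (1 + √(2 log(1/δ))). Then with probability at least 1 − 2δ, the target population embedding mean lies within ε_{t'} of the weighted empirical source embedding mean: ‖ μ_t − (1/n_s) Σ_{i=1}^{n_s} w(x_i) φ(x_i) ‖ ≤ ε_{t'} (equivalently, P_t lies in the MMD ball of radius ε_{t'} centered at the weighted empirical source distribution). -/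

import Mathlib

set_option maxHeartbeats 1000000

open MeasureTheory Real
open scoped RealInnerProductSpace BigOperators NNReal ENNReal


lemma hoeff_core (p : ℝ) (hp0 : 0 ≤ p) (hp1 : p ≤ 1) :
    ∀ h : ℝ, 0 ≤ h →
      (1 - p) * Real.exp (-p * h) + p * Real.exp ((1 - p) * h) ≤ Real.exp (h ^ 2 / 8) := by
  have hD : ∀ t : ℝ, 0 < 1 - p + p * Real.exp t := by
    intro t
    rcases eq_or_lt_of_le hp0 with h0 | h0
    · simp [← h0]
    · have := Real.exp_pos t
      nlinarith
  set D : ℝ → ℝ := fun t => 1 - p + p * Real.exp t with hDdef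
  have hDderiv : ∀ t : ℝ, HasDerivAt D (p * Real.exp t) t := by
    intro t
    simpa [hDdef] using ((Real.hasDerivAt_exp t).const_mul p).const_add (1 - p)
  set G : ℝ → ℝ := fun t => p * Real.exp t / D t - p with hGdef
  have hGderiv : ∀ t : ℝ, HasDerivAt G
      ((p * Real.exp t * D t - p * Real.exp t * (p * Real.exp t)) / (D t) ^ 2) t := by
    intro t
    exact (((Real.hasDerivAt_exp t).const_mul p).div (hDderiv t) (hD t).ne').sub_const p
  have hG0 : G 0 = 0 := by simp [hGdef, hDdef]
  have hG'le : ∀ t : ℝ,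
      (p * Real.exp t * D t - p * Real.exp t * (p * Real.exp t)) / (D t) ^ 2 ≤ 1 / 4 := by
    intro t
    rw [div_le_iff₀ (pow_pos (hD t) 2)]
    have hDt : D t = 1 - p + p * Real.exp t := rfl
    nlinarith [sq_nonneg ((1 - p) - p * Real.exp t), (hD t)]
  -- Step 1 : G t ≤ t / 4 for t ≥ 0
  have step1 : ∀ t : ℝ, 0 ≤ t → G t ≤ t / 4 := by
    intro t ht
    set g : ℝ → ℝ := fun s => s / 4 - G s with hgdef
    have hgderiv : ∀ s : ℝ, HasDerivAt g (1 / 4 -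
        (p * Real.exp s * D s - p * Real.exp s * (p * Real.exp s)) / (D s) ^ 2) s := by
      intro s
      exact ((hasDerivAt_id s).div_const 4).sub (hGderiv s)
    have hmono : MonotoneOn g (Set.Ici (0 : ℝ)) := by
      refine monotoneOn_of_deriv_nonneg (convex_Ici 0)
        (Continuous.continuousOn ?_) (fun s _ => (hgderiv s).differentiableAt.differentiableWithinAt) (fun s hs => ?_)
      · exact continuous_iff_continuousAt.2 fun s => (hgderiv s).continuousAt
      · rw [(hgderiv s).deriv]
        have := hG'le s
        linarith
    have := hmono (Set.self_mem_Ici) (Set.mem_Ici.2 ht) ht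
    simp [hgdef, hG0] at this
    linarith
  intro h hh
  set L : ℝ → ℝ := fun t => Real.log (D t) - p * t with hLdef
  have hLderiv : ∀ t : ℝ, HasDerivAt L (G t) t := by
    intro t
    have h1 : HasDerivAt (fun t => Real.log (D t)) (p * Real.exp t / D t) t :=
      (hDderiv t).log (hD t).ne'
    exact (h1.sub ((hasDerivAt_id t).const_mul p)).congr_deriv (by simp [hGdef])
  have hL0 : L 0 = 0 := by simp [hLdef, hDdef]
  have step2 : L h ≤ h ^ 2 / 8 := by
    set k : ℝ → ℝ := fun s => s ^ 2 / 8 - L s with hkdef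
    have hkderiv : ∀ s : ℝ, HasDerivAt k (s / 4 - G s) s := by
      intro s
      have h1 : HasDerivAt (fun s : ℝ => s ^ 2 / 8) (s / 4) s := by
        have := ((hasDerivAt_pow 2 s).div_const 8)
        simpa [pow_one] using this.congr_deriv (by ring)
      exact h1.sub (hLderiv s)
    have hmono : MonotoneOn k (Set.Ici (0 : ℝ)) := by
      refine monotoneOn_of_deriv_nonneg (convex_Ici 0)
        (Continuous.continuousOn ?_) (fun s _ => (hkderiv s).differentiableAt.differentiableWithinAt) (fun s hs => ?_)
      · exact continuous_iff_continuousAt.2 fun s => (hkderiv s).continuousAt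
      · rw [(hkderiv s).deriv]
        have hs0 : (0:ℝ) ≤ s := le_of_lt (by simpa using hs)
        have := step1 s hs0
        linarith
    have := hmono (Set.self_mem_Ici) (Set.mem_Ici.2 hh) hh
    simp [hkdef, hL0] at this
    linarith
  -- convert
  have hexp : (1 - p) * Real.exp (-p * h) + p * Real.exp ((1 - p) * h)
      = Real.exp (-p * h) * D h := by
    rw [hDdef]
    simp only []
    rw [mul_add, mul_comm (Real.exp (-p*h)) (p * Real.exp h)]
    rw [sub_mul, one_mul, mul_assoc, ← Real.exp_add]
    ring_nf
  rw [hexp]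
  have hlog : Real.exp (-p*h) * D h = Real.exp (L h) := by
    rw [hLdef]
    simp only []
    rw [Real.exp_sub, Real.exp_log (hD h), div_eq_mul_inv, ← Real.exp_neg, mul_comm]
    ring_nf
    simp only [hDdef]
    ring
  rw [hlog]
  exact Real.exp_le_exp.2 step2

lemma hoeff_meas {Ω : Type*} [MeasurableSpace Ω] (μ : Measure Ω) [IsProbabilityMeasure μ]
    (Y : Ω → ℝ) (hY : Measurable Y) (a b : ℝ) (ha : ∀ ω, a ≤ Y ω) (hb : ∀ ω, Y ω ≤ b)
    (hmean : ∫ ω, Y ω ∂μ = 0) :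
    ∫ ω, Real.exp (Y ω) ∂μ ≤ Real.exp ((b - a) ^ 2 / 8) := by
  have hYi : Integrable Y μ := by
    refine Integrable.mono' (integrable_const (max |a| |b|)) hY.aestronglyMeasurable
      (Filter.Eventually.of_forall fun ω => ?_)
    simpa [Real.norm_eq_abs] using abs_le_max_abs_abs (ha ω) (hb ω)
  have ha0 : a ≤ 0 := by
    have h1 : ∫ _ω, a ∂μ ≤ ∫ ω, Y ω ∂μ := integral_mono (integrable_const a) hYi ha
    simpa [hmean] using h1
  have hb0 : 0 ≤ b := by
    have h1 : ∫ ω, Y ω ∂μ ≤ ∫ _ω, b ∂μ := integral_mono hYi (integrable_const b) hb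
    simpa [hmean] using h1
  rcases eq_or_lt_of_le (ha0.trans hb0) with hab | hab
  · -- a = 0 = b, so Y = 0
    have ha' : a = 0 := by linarith
    have hb' : b = 0 := by linarith
    have hY0 : ∀ ω, Y ω = 0 := fun ω =>
      le_antisymm (by rw [← hb']; exact hb ω) (by rw [← ha']; exact ha ω)
    simp [hY0, ha', hb']
  · have hba : (0:ℝ) < b - a := sub_pos.2 hab
    set c1 : ℝ := (b * Real.exp a - a * Real.exp b) / (b - a) with hc1
    set c2 : ℝ := (Real.exp b - Real.exp a) / (b - a) with hc2
    have key : ∀ y : ℝ, a ≤ y → y ≤ b → Real.exp y ≤ c1 + c2 * y := by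
      intro y hy1 hy2
      have hs : (0:ℝ) ≤ (b - y) / (b - a) := div_nonneg (by linarith) hba.le
      have ht : (0:ℝ) ≤ (y - a) / (b - a) := div_nonneg (by linarith) hba.le
      have hst : (b - y) / (b - a) + (y - a) / (b - a) = 1 := by field_simp; ring
      have h2 := convexOn_exp.2 (Set.mem_univ a) (Set.mem_univ b) hs ht hst
      simp only [smul_eq_mul] at h2
      have harg : (b - y) / (b - a) * a + (y - a) / (b - a) * b = y := by
        field_simp; ring
      rw [harg] at h2
      have heq2 : (b - y) / (b - a) * Real.exp a + (y - a) / (b - a) * Real.exp b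
          = c1 + c2 * y := by
        rw [hc1, hc2]; field_simp; ring
      linarith
    have hi : Integrable (fun ω => Real.exp (Y ω)) μ := by
      refine Integrable.mono' (integrable_const (Real.exp b))
        (Real.continuous_exp.measurable.comp hY).aestronglyMeasurable
        (Filter.Eventually.of_forall fun ω => ?_)
      rw [Real.norm_eq_abs, abs_of_pos (Real.exp_pos _)]
      exact Real.exp_le_exp.2 (hb ω)
    have hle : ∫ ω, Real.exp (Y ω) ∂μ ≤ ∫ ω, (c1 + c2 * Y ω) ∂μ := by
      refine integral_mono hi ((integrable_const c1).add (hYi.const_mul c2))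
        fun ω => key _ (ha ω) (hb ω)
    have heq : ∫ ω, (c1 + c2 * Y ω) ∂μ = c1 := by
      rw [integral_add (integrable_const c1) (hYi.const_mul c2), integral_const,
        integral_const_mul, hmean]
      simp
    rw [heq] at hle
    refine hle.trans ?_
    -- now c1 ≤ exp ((b-a)^2/8)
    set h : ℝ := b - a with hh
    set p : ℝ := -a / h with hp
    have hh0 : (0:ℝ) < h := hba
    have hp0 : 0 ≤ p := div_nonneg (neg_nonneg.2 ha0) hh0.le
    have hp1 : p ≤ 1 := by
      rw [div_le_one hh0]
      linarith
    have e1 : -p * h = a := by rw [hp]; field_simp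
    have e2 : (1 - p) * h = b := by linear_combination e1 + hh
    have e3 : c1 = (1 - p) * Real.exp (-p * h) + p * Real.exp ((1 - p) * h) := by
      rw [e1, e2, hc1, hp]
      field_simp
      ring
    rw [e3]
    exact hoeff_core p hp0 hp1 h hh0.le

lemma int_of_bdd {Ω : Type*} [MeasurableSpace Ω] {μ : Measure Ω} [IsFiniteMeasure μ]
    {h : Ω → ℝ} (hm : AEStronglyMeasurable h μ) {C : ℝ} (hb : ∀ ω, |h ω| ≤ C) :
    Integrable h μ :=
  Integrable.mono' (integrable_const C) hm
    (Filter.Eventually.of_forall fun ω => by simpa [Real.norm_eq_abs] using hb ω)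

lemma mcdiarmid_mgf {X : Type*} [MeasurableSpace X] (μ : Measure X) [IsProbabilityMeasure μ]
    (lam d C : ℝ) (hlam : 0 ≤ lam) :
    ∀ (n : ℕ) (f : (Fin n → X) → ℝ), Measurable f → (∀ x, |f x| ≤ C) →
      (∀ (i : Fin n) (x x' : Fin n → X), (∀ j, j ≠ i → x j = x' j) → f x - f x' ≤ d) →
      ∫ x, Real.exp (lam * (f x - ∫ y, f y ∂(Measure.pi fun _ : Fin n => μ)))
          ∂(Measure.pi fun _ : Fin n => μ) ≤ Real.exp (n * (lam ^ 2 * d ^ 2 / 8)) := by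
  have hne : Nonempty X := by
    rcases isEmpty_or_nonempty X with hX | hX
    · exfalso
      have h1 := measure_univ (μ := μ)
      rw [Set.univ_eq_empty_iff.2 hX] at h1
      simp at h1
    · exact hX
  intro n
  induction n with
  | zero =>
    intro f hf hC hosc
    have h1 : ∫ y, f y ∂(Measure.pi fun _ : Fin 0 => μ) = f default := by
      rw [integral_unique]
      simp
    have h3 : (fun x : Fin 0 → X =>
        Real.exp (lam * (f x - ∫ y, f y ∂(Measure.pi fun _ : Fin 0 => μ)))) = fun _ => 1 := by
      funext x
      rw [h1, congrArg f (Subsingleton.elim x default)]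
      simp
    rw [h3]
    simp
  | succ n IH =>
    intro f hf hC hosc
    set ν := Measure.pi fun _ : Fin n => μ with hν
    set PP := Measure.pi fun _ : Fin (n + 1) => μ with hPP
    set m := ∫ y, f y ∂PP with hm
    set e := MeasurableEquiv.piFinSuccAbove (fun _ : Fin (n + 1) => X) 0 with he
    have mp : MeasurePreserving e.symm (μ.prod ν) PP :=
      (measurePreserving_piFinSuccAbove (fun _ : Fin (n + 1) => μ) 0).symm e
    have hcons : ∀ (x0 : X) (y : Fin n → X), e.symm (x0, y) = Fin.cons x0 y := by
      intro x0 y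
      have h0 : e.symm (x0, y) = Fin.insertNth 0 x0 y := rfl
      rw [h0, Fin.insertNth_zero']
    set g : X → (Fin n → X) → ℝ := fun x0 y => f (Fin.cons x0 y) with hg
    have hgm : Measurable (fun q : X × (Fin n → X) => g q.1 q.2) := by
      have h1 : (fun q : X × (Fin n → X) => g q.1 q.2) = fun q => f (e.symm q) := by
        funext q
        exact (congrArg f (hcons q.1 q.2)).symm
      rw [h1]
      exact hf.comp e.symm.measurable
    have hgsec : ∀ y, Measurable fun x0 => g x0 y :=
      fun y => hgm.comp (measurable_id.prodMk measurable_const)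
    have hgC : ∀ x0 y, |g x0 y| ≤ C := fun x0 y => hC _
    have hgseci : ∀ y, Integrable (fun x0 => g x0 y) μ :=
      fun y => int_of_bdd (hgsec y).aestronglyMeasurable (fun x0 => hgC x0 y)
    set F : (Fin n → X) → ℝ := fun y => ∫ x0, g x0 y ∂μ with hF
    have hFm : Measurable F := by
      have h1 : Measurable fun q : (Fin n → X) × X => g q.2 q.1 := hgm.comp measurable_swap
      exact (h1.stronglyMeasurable.integral_prod_right').measurable
    have hFC : ∀ y, |F y| ≤ C := by
      intro y
      calc |F y| ≤ ∫ x0, |g x0 y| ∂μ := by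
            simpa [Real.norm_eq_abs] using norm_integral_le_integral_norm (fun x0 => g x0 y) (μ := μ)
        _ ≤ ∫ _x0, C ∂μ := integral_mono (hgseci y).abs (integrable_const C)
            (fun x0 => hgC x0 y)
        _ = C := by simp
    have hFosc : ∀ (i : Fin n) (y y' : Fin n → X), (∀ j, j ≠ i → y j = y' j) →
        F y - F y' ≤ d := by
      intro i y y' hyy'
      have h1 : ∀ x0, g x0 y - g x0 y' ≤ d := by
        intro x0
        refine hosc i.succ (Fin.cons x0 y) (Fin.cons x0 y') (fun j => ?_)
        refine Fin.cases ?_ ?_ j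
        · intro _; simp
        · intro k hk
          simp only [Fin.cons_succ]
          exact hyy' k (fun hki => hk (by rw [hki]))
      have h2 : F y - F y' = ∫ x0, (g x0 y - g x0 y') ∂μ := by
        rw [integral_sub (hgseci y) (hgseci y')]
      rw [h2]
      calc ∫ x0, (g x0 y - g x0 y') ∂μ ≤ ∫ _x0, d ∂μ :=
            integral_mono ((hgseci y).sub (hgseci y')) (integrable_const d) h1
        _ = d := by simp
    -- mean of F equals m
    have hgunci : Integrable (fun q : X × (Fin n → X) => g q.1 q.2) (μ.prod ν) :=
      int_of_bdd hgm.aestronglyMeasurable (fun q => hgC q.1 q.2)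
    have hFmean : ∫ y, F y ∂ν = m := by
      rw [hm, ← mp.integral_comp e.symm.measurableEmbedding f]
      have hgunci' : Integrable (Function.uncurry g) (μ.prod ν) := hgunci
      have h1 : ∫ q, f (e.symm q) ∂(μ.prod ν) = ∫ q : X × (Fin n → X), g q.1 q.2 ∂(μ.prod ν) := by
        congr 1
        funext q
        exact congrArg f (hcons q.1 q.2)
      rw [h1, integral_prod _ hgunci]
      exact (integral_integral_swap hgunci').symm
    -- basic bounds
    have hmC : |m| ≤ C := by
      rw [hm]
      calc |∫ y, f y ∂PP| ≤ ∫ y, |f y| ∂PP := by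
            simpa [Real.norm_eq_abs] using norm_integral_le_integral_norm f (μ := PP)
        _ ≤ ∫ _y, C ∂PP := integral_mono
            (int_of_bdd hf.aestronglyMeasurable hC).abs (integrable_const C) (fun x => hC x)
        _ = C := by simp
    have hd0 : 0 ≤ d := by
      have h0 := hosc 0 (fun _ => hne.some) (fun _ => hne.some) (fun _ _ => rfl)
      simpa using h0
    set K : ℝ := Real.exp (lam ^ 2 * d ^ 2 / 8) with hKdef
    -- inner Hoeffding bound, pointwise in y
    have inner : ∀ y : Fin n → X,
        ∫ x0, Real.exp (lam * (g x0 y - F y)) ∂μ ≤ K := by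
      intro y
      set s := sInf (Set.range fun x0 => g x0 y) with hs
      have hbdd : BddBelow (Set.range fun x0 => g x0 y) := by
        refine ⟨-C, ?_⟩
        rintro r ⟨x0, rfl⟩
        linarith [abs_le.1 (hgC x0 y) |>.1]
      have hnon : (Set.range fun x0 => g x0 y).Nonempty := Set.range_nonempty _
      have hsle : ∀ x0, s ≤ g x0 y := fun x0 => csInf_le hbdd ⟨x0, rfl⟩
      have hsge : ∀ x0, g x0 y ≤ s + d := by
        intro x0
        have h1 : g x0 y - d ≤ s := by
          refine le_csInf hnon ?_
          rintro r ⟨x0', rfl⟩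
          have h2 : f (Fin.cons x0 y) - f (Fin.cons x0' y) ≤ d := by
            refine hosc 0 _ _ (fun j => ?_)
            refine Fin.cases ?_ ?_ j
            · intro h; exact absurd rfl h
            · intro k _; simp
          have h3 : g x0 y - g x0' y ≤ d := h2
          linarith
        linarith
      have hmean0 : ∫ x0, lam * (g x0 y - F y) ∂μ = 0 := by
        rw [integral_const_mul, integral_sub (hgseci y) (integrable_const (F y)),
          integral_const]
        simp [hF]
      have hH := hoeff_meas μ (fun x0 => lam * (g x0 y - F y))
        (((hgsec y).sub measurable_const).const_mul lam)
        (lam * (s - F y)) (lam * (s + d - F y))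
        (fun x0 => mul_le_mul_of_nonneg_left (by linarith [hsle x0]) hlam)
        (fun x0 => mul_le_mul_of_nonneg_left (by linarith [hsge x0]) hlam) hmean0
      refine hH.trans (le_of_eq ?_)
      rw [hKdef]
      congr 1
      ring
    -- integrability facts
    have hexp_meas : Measurable fun q : X × (Fin n → X) =>
        Real.exp (lam * (g q.1 q.2 - m)) :=
      ((hgm.sub measurable_const).const_mul lam).exp
    set K0 : ℝ := Real.exp (lam * (2 * C)) with hK0def
    have habs_exp : ∀ (t : ℝ), |t| ≤ 2 * C → |Real.exp (lam * t)| ≤ K0 := by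
      intro t ht
      rw [abs_of_pos (Real.exp_pos _), hK0def]
      exact Real.exp_le_exp.2 (mul_le_mul_of_nonneg_left (le_trans (le_abs_self t) ht) hlam)
    have hgm_bound : ∀ x0 y, |g x0 y - m| ≤ 2 * C := by
      intro x0 y
      have := abs_sub_abs_le_abs_sub (g x0 y) m
      have h1 := abs_sub (g x0 y) m
      calc |g x0 y - m| ≤ |g x0 y| + |m| := abs_sub _ _
        _ ≤ 2 * C := by linarith [hgC x0 y, hmC]
    have hexp_int : Integrable (fun q : X × (Fin n → X) =>
        Real.exp (lam * (g q.1 q.2 - m))) (μ.prod ν) :=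
      int_of_bdd hexp_meas.aestronglyMeasurable
        (fun q => habs_exp _ (hgm_bound q.1 q.2))
    have hexp_int' : Integrable
        (Function.uncurry fun x0 y => Real.exp (lam * (g x0 y - m))) (μ.prod ν) := by
      exact hexp_int
    set Gm : (Fin n → X) → ℝ := fun y => ∫ x0, Real.exp (lam * (g x0 y - m)) ∂μ with hGm
    have hGm_meas : Measurable Gm := by
      have h1 : Measurable fun q : (Fin n → X) × X =>
          Real.exp (lam * (g q.2 q.1 - m)) := by
        apply Real.measurable_exp.comp
        apply Measurable.const_mul
        exact Measurable.sub (hgm.comp measurable_swap) measurable_const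
      exact (h1.stronglyMeasurable.integral_prod_right').measurable
    have hGm_bound : ∀ y, |Gm y| ≤ K0 := by
      intro y
      calc |Gm y| ≤ ∫ x0, |Real.exp (lam * (g x0 y - m))| ∂μ := by
            simpa [Real.norm_eq_abs] using norm_integral_le_integral_norm
              (fun x0 => Real.exp (lam * (g x0 y - m))) (μ := μ)
        _ ≤ ∫ _x0, K0 ∂μ := by
            refine integral_mono ?_ (integrable_const K0)
              (fun x0 => habs_exp _ (hgm_bound x0 y))
            exact (int_of_bdd ((hexp_meas.comp
              (measurable_id.prodMk measurable_const)).aestronglyMeasurable)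
              (fun x0 => habs_exp _ (hgm_bound x0 y))).abs
        _ = K0 := by simp
    have hGm_int : Integrable Gm ν := int_of_bdd hGm_meas.aestronglyMeasurable hGm_bound
    have hFexp_meas : Measurable fun y => Real.exp (lam * (F y - m)) :=
      ((hFm.sub measurable_const).const_mul lam).exp
    have hFexp_bound : ∀ y, |Real.exp (lam * (F y - m))| ≤ K0 := by
      intro y
      refine habs_exp _ ?_
      calc |F y - m| ≤ |F y| + |m| := abs_sub _ _
        _ ≤ 2 * C := by linarith [hFC y, hmC]
    have hFexp_int : Integrable (fun y => Real.exp (lam * (F y - m))) ν :=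
      int_of_bdd hFexp_meas.aestronglyMeasurable hFexp_bound
    -- pointwise bound on Gm
    have hGm_le : ∀ y, Gm y ≤ K * Real.exp (lam * (F y - m)) := by
      intro y
      have h4 : Gm y = (∫ x0, Real.exp (lam * (g x0 y - F y)) ∂μ)
          * Real.exp (lam * (F y - m)) := by
        rw [hGm]
        simp only []
        rw [← integral_mul_const]
        congr 1
        funext x0
        rw [← Real.exp_add]
        congr 1
        ring
      rw [h4]
      exact mul_le_mul_of_nonneg_right (inner y) (Real.exp_pos _).le
    -- main chain
    have hstep1 : ∫ x, Real.exp (lam * (f x - m)) ∂PP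
        = ∫ q : X × (Fin n → X), Real.exp (lam * (g q.1 q.2 - m)) ∂(μ.prod ν) := by
      rw [← mp.integral_comp e.symm.measurableEmbedding
        (fun x => Real.exp (lam * (f x - m)))]
      congr 1
      funext q
      rw [congrArg f (hcons q.1 q.2)]
    have hstep2 : ∫ q : X × (Fin n → X), Real.exp (lam * (g q.1 q.2 - m)) ∂(μ.prod ν)
        = ∫ y, Gm y ∂ν := by
      rw [integral_prod _ hexp_int]
      exact integral_integral_swap hexp_int'
    have hstep3 : ∫ y, Gm y ∂ν ≤ ∫ y, K * Real.exp (lam * (F y - m)) ∂ν :=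
      integral_mono hGm_int (hFexp_int.const_mul K) hGm_le
    have hstep4 : ∫ y, K * Real.exp (lam * (F y - m)) ∂ν
        = K * ∫ y, Real.exp (lam * (F y - m)) ∂ν := integral_const_mul K _
    have hstep5 : ∫ y, Real.exp (lam * (F y - m)) ∂ν ≤ Real.exp (n * (lam ^ 2 * d ^ 2 / 8)) := by
      have h6 := IH F hFm hFC hFosc
      rwa [hFmean] at h6
    calc ∫ x, Real.exp (lam * (f x - m)) ∂PP = ∫ y, Gm y ∂ν := by rw [hstep1, hstep2]
      _ ≤ K * ∫ y, Real.exp (lam * (F y - m)) ∂ν := by rw [← hstep4]; exact hstep3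
      _ ≤ K * Real.exp (n * (lam ^ 2 * d ^ 2 / 8)) :=
          mul_le_mul_of_nonneg_left hstep5 (Real.exp_pos _).le
      _ = Real.exp ((n + 1 : ℕ) * (lam ^ 2 * d ^ 2 / 8)) := by
          rw [hKdef, ← Real.exp_add]
          congr 1
          push_cast
          ring


lemma pi_map_eval {X : Type*} [MeasurableSpace X] (μ : Measure X) [IsProbabilityMeasure μ]
    {n : ℕ} (i : Fin n) :
    Measure.map (fun x : Fin n → X => x i) (Measure.pi fun _ => μ) = μ := by
  classical
  ext s hs
  rw [Measure.map_apply (measurable_pi_apply i) hs]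
  have hpre : (fun x : Fin n → X => x i) ⁻¹' s
      = Set.pi Set.univ (fun k => if k = i then s else Set.univ) := by
    ext x
    simp only [Set.mem_preimage, Set.mem_pi, Set.mem_univ, true_implies]
    constructor
    · intro h k
      by_cases hk : k = i
      · subst hk; simpa using h
      · simp [hk]
    · intro h
      have := h i
      simpa using this
  rw [hpre, Measure.pi_pi]
  have h1 : ∀ k : Fin n, μ (if k = i then s else Set.univ)
      = if k = i then μ s else 1 := by
    intro k; split_ifs <;> simp
  rw [Finset.prod_congr rfl (fun k _ => h1 k),
    ← Finset.mul_prod_erase Finset.univ _ (Finset.mem_univ i)]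
  have hrest : ∏ k ∈ Finset.univ.erase i, (if k = i then μ s else 1) = 1 :=
    Finset.prod_eq_one (fun k hk => by simp [(Finset.mem_erase.1 hk).1])
  simp [hrest]

lemma pi_map_pair {X : Type*} [MeasurableSpace X] (μ : Measure X) [IsProbabilityMeasure μ]
    {n : ℕ} (i j : Fin n) (hij : i ≠ j) :
    Measure.map (fun x : Fin n → X => (x i, x j)) (Measure.pi fun _ => μ) = μ.prod μ := by
  classical
  symm
  refine Measure.prod_eq (fun s t hs ht => ?_)
  rw [Measure.map_apply ((measurable_pi_apply i).prodMk (measurable_pi_apply j)) (hs.prod ht)]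
  have hpre : (fun x : Fin n → X => (x i, x j)) ⁻¹' (s ×ˢ t)
      = Set.pi Set.univ (fun k => if k = i then s else if k = j then t else Set.univ) := by
    ext x
    simp only [Set.mem_preimage, Set.mem_prod, Set.mem_pi, Set.mem_univ, true_implies]
    constructor
    · rintro ⟨h1, h2⟩ k
      by_cases hk : k = i
      · subst hk; simpa using h1
      · by_cases hk2 : k = j
        · subst hk2; simp [hk, h2]
        · simp [hk, hk2]
    · intro h
      refine ⟨?_, ?_⟩
      · have := h i; simpa using this
      · have := h j; simpa [Ne.symm hij] using this
  rw [hpre, Measure.pi_pi]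
  have h1 : ∀ k : Fin n, μ (if k = i then s else if k = j then t else Set.univ)
      = if k = i then μ s else if k = j then μ t else 1 := by
    intro k; split_ifs <;> simp
  rw [Finset.prod_congr rfl (fun k _ => h1 k),
    ← Finset.mul_prod_erase Finset.univ _ (Finset.mem_univ i),
    ← Finset.mul_prod_erase (Finset.univ.erase i) _
      (Finset.mem_erase.2 ⟨Ne.symm hij, Finset.mem_univ j⟩)]
  have hrest : ∏ k ∈ (Finset.univ.erase i).erase j,
      (if k = i then μ s else if k = j then μ t else 1) = 1 := by
    refine Finset.prod_eq_one (fun k hk => ?_)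
    have hk1 := (Finset.mem_erase.1 hk).1
    have hk2 := (Finset.mem_erase.1 (Finset.mem_erase.1 hk).2).1
    simp [hk1, hk2]
  simp [hrest, Ne.symm hij]

/-- Theorem 1 (containment part): with probability at least `1 − 2δ`, the target
population embedding mean `μ_t` lies within
`ε_{t'} = √M (√(B²/n_s + 1/n_t) + √(1/n_t)) (1 + √(2 log(1/δ)))`
of the weighted empirical source embedding mean, i.e. `P_t` lies in the MMD ball of
radius `ε_{t'}` centered at the weighted empirical source distribution. -/
theorem target_measure_in_ambiguity_set
    {X : Type*} [MeasurableSpace X]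
    {H : Type*} [NormedAddCommGroup H] [InnerProductSpace ℝ H] [CompleteSpace H]
    (M B : ℝ) (hM : 0 < M) (hB : 0 < B)
    (φ : X → H) (hφsm : StronglyMeasurable φ) (hφ : ∀ x, ‖φ x‖ ≤ Real.sqrt M)
    (Ps Pt : Measure X) [IsProbabilityMeasure Ps] [IsProbabilityMeasure Pt]
    (w : X → ℝ) (hwmeas : Measurable w) (hw : ∀ x, 0 ≤ w x ∧ w x ≤ B)
    (hPt : Pt = Ps.withDensity fun x => ENNReal.ofReal (w x))
    (hint : Integrable φ Pt)
    (μt : H) (hμt : μt = ∫ x, φ x ∂Pt)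
    (ns nt : ℕ) (hns : 0 < ns) (hnt : 0 < nt)
    (δ : ℝ) (hδ : δ ∈ Set.Ioo (0 : ℝ) 1)
    (ε : ℝ)
    (hε : ε = Real.sqrt M * (Real.sqrt (B ^ 2 / ns + 1 / nt) + Real.sqrt (1 / nt))
          * (1 + Real.sqrt (2 * Real.log (1 / δ)))) :
    ((Measure.pi fun _ : Fin ns => Ps).prod (Measure.pi fun _ : Fin nt => Pt))
      {p : (Fin ns → X) × (Fin nt → X) |
        ‖μt - (1 / (ns : ℝ)) • ∑ i, w (p.1 i) • φ (p.1 i)‖ ≤ ε}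
      ≥ ENNReal.ofReal (1 - 2 * δ) := by
  obtain ⟨hδ0, hδ1⟩ := hδ
  have hns0 : (0:ℝ) < (ns:ℝ) := by exact_mod_cast hns
  have hnt0 : (0:ℝ) < (nt:ℝ) := by exact_mod_cast hnt
  have hsM : (0:ℝ) < Real.sqrt M := Real.sqrt_pos.2 hM
  have hsM2 : Real.sqrt M ^ 2 = M := Real.sq_sqrt hM.le
  set g : X → H := fun a => w a • φ a with hgdef
  set Q : Measure (Fin ns → X) := Measure.pi fun _ : Fin ns => Ps with hQ
  set S : (Fin ns → X) → H := fun x => (1 / (ns : ℝ)) • ∑ i, g (x i) with hSdef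
  set f : (Fin ns → X) → ℝ := fun x => ‖μt - S x‖ with hfdef
  -- measurability
  have hgsm : StronglyMeasurable g := hwmeas.stronglyMeasurable.smul hφsm
  have husm : ∀ i : Fin ns, StronglyMeasurable fun x : Fin ns → X => g (x i) :=
    fun i => hgsm.comp_measurable (measurable_pi_apply i)
  have hSsm : StronglyMeasurable S :=
    (Finset.stronglyMeasurable_fun_sum Finset.univ fun i _ => husm i).const_smul (1 / (ns:ℝ))
  have hfm : Measurable f := (stronglyMeasurable_const.sub hSsm).norm.measurable
  -- bounds
  have hgb : ∀ a, ‖g a‖ ≤ B * Real.sqrt M := by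
    intro a
    rw [hgdef]
    simp only []
    rw [norm_smul, Real.norm_eq_abs, abs_of_nonneg (hw a).1]
    exact mul_le_mul (hw a).2 (hφ a) (norm_nonneg _) hB.le
  have hμtn : ‖μt‖ ≤ Real.sqrt M := by
    rw [hμt]
    calc ‖∫ x, φ x ∂Pt‖ ≤ ∫ x, ‖φ x‖ ∂Pt := norm_integral_le_integral_norm φ
      _ ≤ ∫ _x, Real.sqrt M ∂Pt := integral_mono hint.norm (integrable_const _) hφ
      _ = Real.sqrt M := by simp
  have hSb : ∀ x, ‖S x‖ ≤ B * Real.sqrt M := by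
    intro x
    rw [hSdef]
    simp only []
    rw [norm_smul, Real.norm_eq_abs, abs_of_nonneg (by positivity : (0:ℝ) ≤ 1 / (ns:ℝ))]
    calc (1 / (ns:ℝ)) * ‖∑ i, g (x i)‖ ≤ (1 / (ns:ℝ)) * ∑ i : Fin ns, (B * Real.sqrt M) := by
          refine mul_le_mul_of_nonneg_left ?_ (by positivity)
          exact (norm_sum_le _ _).trans (Finset.sum_le_sum fun i _ => hgb (x i))
      _ = B * Real.sqrt M := by
          rw [Finset.sum_const, Finset.card_univ, Fintype.card_fin, nsmul_eq_mul]
          field_simp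
  set C : ℝ := Real.sqrt M + B * Real.sqrt M with hCdef
  have hfb : ∀ x, |f x| ≤ C := by
    intro x
    rw [hfdef]
    simp only []
    rw [abs_of_nonneg (norm_nonneg _)]
    exact (norm_sub_le _ _).trans (add_le_add hμtn (hSb x))
  set d : ℝ := 2 * (B * Real.sqrt M) / ns with hddef
  have hd0 : 0 < d := by positivity
  have hfosc : ∀ (i : Fin ns) (x x' : Fin ns → X), (∀ j, j ≠ i → x j = x' j) →
      f x - f x' ≤ d := by
    intro i x x' hxx'
    have h2 : S x' - S x = (1 / (ns:ℝ)) • (g (x' i) - g (x i)) := by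
      rw [hSdef]
      simp only []
      rw [← smul_sub]
      congr 1
      rw [← Finset.sum_sub_distrib]
      refine Finset.sum_eq_single_of_mem i (Finset.mem_univ i) (fun j _ hj => ?_)
      rw [hxx' j hj, sub_self]
    have h1 : f x - f x' ≤ ‖S x' - S x‖ := by
      calc f x - f x' ≤ ‖(μt - S x) - (μt - S x')‖ := norm_sub_norm_le _ _
        _ = ‖S x' - S x‖ := by rw [show (μt - S x) - (μt - S x') = S x' - S x from by abel]
    refine h1.trans ?_
    rw [h2, norm_smul, Real.norm_eq_abs,
      abs_of_nonneg (by positivity : (0:ℝ) ≤ 1 / (ns:ℝ)), hddef]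
    calc (1 / (ns:ℝ)) * ‖g (x' i) - g (x i)‖
        ≤ (1 / (ns:ℝ)) * (B * Real.sqrt M + B * Real.sqrt M) := by
          refine mul_le_mul_of_nonneg_left ?_ (by positivity)
          exact (norm_sub_le _ _).trans (add_le_add (hgb _) (hgb _))
      _ = 2 * (B * Real.sqrt M) / ns := by ring
  -- mean identities
  have hgint : Integrable g Ps := by
    refine Integrable.mono' (integrable_const (B * Real.sqrt M)) hgsm.aestronglyMeasurable
      (Filter.Eventually.of_forall hgb)
  have hgmean : ∫ a, g a ∂Ps = μt := by
    rw [hμt, hPt]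
    have h1 : (fun x => ENNReal.ofReal (w x)) = (fun x => ((w x).toNNReal : ℝ≥0∞)) := rfl
    rw [h1, integral_withDensity_eq_integral_smul hwmeas.real_toNNReal φ]
    refine integral_congr_ae (Filter.Eventually.of_forall fun a => ?_)
    rw [hgdef]
    simp only [NNReal.smul_def, Real.coe_toNNReal _ (hw a).1]
  have huint : ∀ i : Fin ns, Integrable (fun x : Fin ns → X => g (x i)) Q := by
    intro i
    exact Integrable.mono' (integrable_const (B * Real.sqrt M))
      (husm i).aestronglyMeasurable (Filter.Eventually.of_forall fun x => hgb _)
  have hueval : ∀ i : Fin ns, ∫ x, g (x i) ∂Q = μt := by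
    intro i
    have h1 : AEStronglyMeasurable g
        (Measure.map (fun x : Fin ns → X => x i) Q) := by
      rw [hQ, pi_map_eval Ps i]
      exact hgsm.aestronglyMeasurable
    have h2 := integral_map (φ := fun x : Fin ns → X => x i) (f := g)
      (measurable_pi_apply i).aemeasurable h1
    rw [hQ] at h2 ⊢
    rw [← h2, pi_map_eval Ps i, hgmean]
  have hinner_int : ∀ i j : Fin ns, Integrable (fun x => ⟪g (x i), g (x j)⟫) Q := by
    intro i j
    refine Integrable.mono' (integrable_const ((B * Real.sqrt M) * (B * Real.sqrt M)))
      ((husm i).inner (husm j)).aestronglyMeasurable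
      (Filter.Eventually.of_forall fun x => ?_)
    rw [Real.norm_eq_abs]
    exact (abs_real_inner_le_norm _ _).trans
      (mul_le_mul (hgb _) (hgb _) (norm_nonneg _) (by positivity))
  have hinner_mu_int : ∀ i : Fin ns, Integrable (fun x => ⟪μt, g (x i)⟫) Q := by
    intro i
    refine Integrable.mono' (integrable_const (Real.sqrt M * (B * Real.sqrt M)))
      (stronglyMeasurable_const.inner (husm i)).aestronglyMeasurable
      (Filter.Eventually.of_forall fun x => ?_)
    rw [Real.norm_eq_abs]
    exact (abs_real_inner_le_norm _ _).trans
      (mul_le_mul hμtn (hgb _) (norm_nonneg _) hsM.le)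
  have hpair : ∀ i j : Fin ns, i ≠ j → ∫ x, ⟪g (x i), g (x j)⟫ ∂Q = ⟪μt, μt⟫ := by
    intro i j hij
    have hpm : Measurable fun x : Fin ns → X => (x i, x j) :=
      (measurable_pi_apply i).prodMk (measurable_pi_apply j)
    have hpsm : StronglyMeasurable fun p : X × X => ⟪g p.1, g p.2⟫ :=
      (hgsm.comp_measurable measurable_fst).inner (hgsm.comp_measurable measurable_snd)
    have hpint : Integrable (fun p : X × X => ⟪g p.1, g p.2⟫) (Ps.prod Ps) := by
      refine Integrable.mono' (integrable_const ((B * Real.sqrt M) * (B * Real.sqrt M)))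
        hpsm.aestronglyMeasurable (Filter.Eventually.of_forall fun p => ?_)
      rw [Real.norm_eq_abs]
      exact (abs_real_inner_le_norm _ _).trans
        (mul_le_mul (hgb _) (hgb _) (norm_nonneg _) (by positivity))
    have h1 : AEStronglyMeasurable (fun p : X × X => ⟪g p.1, g p.2⟫)
        (Measure.map (fun x : Fin ns → X => (x i, x j)) Q) := by
      rw [hQ, pi_map_pair Ps i j hij]
      exact hpsm.aestronglyMeasurable
    have h2 := integral_map (φ := fun x : Fin ns → X => (x i, x j))
      (f := fun p : X × X => ⟪g p.1, g p.2⟫) hpm.aemeasurable h1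
    rw [hQ] at h2 ⊢
    rw [← h2, pi_map_pair Ps i j hij, integral_prod _ hpint]
    have h3 : ∀ a : X, ∫ b, ⟪g a, g b⟫ ∂Ps = ⟪g a, μt⟫ := by
      intro a
      rw [integral_inner hgint (g a), hgmean]
    rw [integral_congr_ae (Filter.Eventually.of_forall h3)]
    have h4 : ∀ a : X, ⟪g a, μt⟫ = ⟪μt, g a⟫ := fun a => real_inner_comm _ _
    rw [integral_congr_ae (Filter.Eventually.of_forall h4), integral_inner hgint μt, hgmean]
  -- second moment bound
  have hT0 : (0:ℝ) ≤ ‖μt‖ ^ 2 := sq_nonneg _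
  have hIsum1 : ∫ x, (∑ i, ⟪μt, g (x i)⟫) ∂Q = (ns:ℝ) * ‖μt‖ ^ 2 := by
    rw [integral_finset_sum _ (fun i _ => hinner_mu_int i)]
    have h1 : ∀ i : Fin ns, ∫ x, ⟪μt, g (x i)⟫ ∂Q = ‖μt‖ ^ 2 := by
      intro i
      rw [integral_inner (huint i) μt, hueval i, real_inner_self_eq_norm_sq]
    rw [Finset.sum_congr rfl fun i _ => h1 i, Finset.sum_const, Finset.card_univ,
      Fintype.card_fin, nsmul_eq_mul]
  have hIsumij : ∫ x, (∑ i, ∑ j, ⟪g (x i), g (x j)⟫) ∂Q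
      ≤ (ns:ℝ) * (M * B ^ 2 + ((ns:ℝ) - 1) * ‖μt‖ ^ 2) := by
    rw [integral_finset_sum _ (fun i _ => integrable_finset_sum _ fun j _ => hinner_int i j)]
    have h1 : ∀ i : Fin ns, ∫ x, (∑ j, ⟪g (x i), g (x j)⟫) ∂Q
        = ∑ j, ∫ x, ⟪g (x i), g (x j)⟫ ∂Q :=
      fun i => integral_finset_sum _ (fun j _ => hinner_int i j)
    rw [Finset.sum_congr rfl fun i _ => h1 i]
    have hbound_i : ∀ i : Fin ns, ∑ j, ∫ x, ⟪g (x i), g (x j)⟫ ∂Q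
        ≤ M * B ^ 2 + ((ns:ℝ) - 1) * ‖μt‖ ^ 2 := by
      intro i
      rw [← Finset.add_sum_erase _ _ (Finset.mem_univ i)]
      have hdiag_i : ∫ x, ⟪g (x i), g (x i)⟫ ∂Q ≤ M * B ^ 2 := by
        refine (integral_mono (hinner_int i i) (integrable_const (M * B ^ 2))
          fun x => ?_).trans ?_
        · rw [real_inner_self_eq_norm_sq]
          calc ‖g (x i)‖ ^ 2 ≤ (B * Real.sqrt M) ^ 2 :=
                pow_le_pow_left₀ (norm_nonneg _) (hgb (x i)) 2
            _ = M * B ^ 2 := by rw [mul_pow, hsM2]; ring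
        · simp
      have herase : ∀ j ∈ Finset.univ.erase i, ∫ x, ⟪g (x i), g (x j)⟫ ∂Q = ‖μt‖ ^ 2 := by
        intro j hj
        rw [hpair i j (Ne.symm (Finset.mem_erase.1 hj).1), real_inner_self_eq_norm_sq]
      rw [Finset.sum_congr rfl herase, Finset.sum_const,
        Finset.card_erase_of_mem (Finset.mem_univ i), Finset.card_univ, Fintype.card_fin,
        nsmul_eq_mul]
      have hcast : ((ns - 1 : ℕ) : ℝ) = (ns:ℝ) - 1 := by
        rw [Nat.cast_sub hns]
        simp
      rw [hcast]
      linarith [hdiag_i]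
    calc ∑ i : Fin ns, ∑ j, ∫ x, ⟪g (x i), g (x j)⟫ ∂Q
        ≤ ∑ _i : Fin ns, (M * B ^ 2 + ((ns:ℝ) - 1) * ‖μt‖ ^ 2) :=
          Finset.sum_le_sum fun i _ => hbound_i i
      _ = (ns:ℝ) * (M * B ^ 2 + ((ns:ℝ) - 1) * ‖μt‖ ^ 2) := by
          rw [Finset.sum_const, Finset.card_univ, Fintype.card_fin, nsmul_eq_mul]
  have hexpand : ∀ x, f x ^ 2 = ‖μt‖ ^ 2 - 2 * ((1 / (ns:ℝ)) * ∑ i, ⟪μt, g (x i)⟫)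
      + (1 / (ns:ℝ)) ^ 2 * ∑ i, ∑ j, ⟪g (x i), g (x j)⟫ := by
    intro x
    rw [hfdef]
    simp only []
    rw [norm_sub_sq_real]
    have e1 : ⟪μt, S x⟫ = (1 / (ns:ℝ)) * ∑ i, ⟪μt, g (x i)⟫ := by
      rw [hSdef]
      simp only []
      rw [real_inner_smul_right, inner_sum]
    have e2 : ‖S x‖ ^ 2 = (1 / (ns:ℝ)) ^ 2 * ∑ i, ∑ j, ⟪g (x i), g (x j)⟫ := by
      rw [← real_inner_self_eq_norm_sq, hSdef]
      simp only []
      rw [real_inner_smul_left, real_inner_smul_right, sum_inner]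
      simp_rw [inner_sum]
      ring
    rw [e1, e2]
  have hfint : Integrable f Q :=
    int_of_bdd hfm.aestronglyMeasurable hfb
  have hf2m : Measurable fun x => f x ^ 2 := hfm.pow_const 2
  have hf2int : Integrable (fun x => f x ^ 2) Q := by
    refine int_of_bdd hf2m.aestronglyMeasurable (C := C ^ 2) fun x => ?_
    rw [abs_of_nonneg (sq_nonneg _), ← sq_abs]
    exact pow_le_pow_left₀ (abs_nonneg _) (hfb x) 2
  have hsum1_int : Integrable (fun x => (∑ i, ⟪μt, g (x i)⟫)) Q :=
    integrable_finset_sum _ fun i _ => hinner_mu_int i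
  have hsumij_int : Integrable (fun x => (∑ i, ∑ j, ⟪g (x i), g (x j)⟫)) Q :=
    integrable_finset_sum _ fun i _ => integrable_finset_sum _ fun j _ => hinner_int i j
  have hf2 : ∫ x, f x ^ 2 ∂Q ≤ M * B ^ 2 / ns := by
    have e : ∫ x, f x ^ 2 ∂Q = ‖μt‖ ^ 2
        - 2 * ((1 / (ns:ℝ)) * ∫ x, (∑ i, ⟪μt, g (x i)⟫) ∂Q)
        + (1 / (ns:ℝ)) ^ 2 * ∫ x, (∑ i, ∑ j, ⟪g (x i), g (x j)⟫) ∂Q := by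
      have hintA : Integrable
          (fun x => ‖μt‖ ^ 2 - 2 * ((1 / (ns:ℝ)) * ∑ i, ⟪μt, g (x i)⟫)) Q := by
        exact (integrable_const _).sub ((hsum1_int.const_mul (1/(ns:ℝ))).const_mul 2)
      have hintB : Integrable
          (fun x => (1 / (ns:ℝ)) ^ 2 * ∑ i, ∑ j, ⟪g (x i), g (x j)⟫) Q := by
        exact hsumij_int.const_mul ((1/(ns:ℝ))^2)
      have hintC : Integrable
          (fun x => 2 * ((1 / (ns:ℝ)) * ∑ i, ⟪μt, g (x i)⟫)) Q := by
        exact (hsum1_int.const_mul (1/(ns:ℝ))).const_mul 2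
      simp_rw [hexpand]
      rw [integral_add hintA hintB, integral_sub (integrable_const (‖μt‖^2)) hintC,
        integral_const, integral_const_mul, integral_const_mul, integral_const_mul]
      simp
    rw [e, hIsum1]
    have h8 : (1 / (ns:ℝ)) ^ 2 * ∫ x, (∑ i, ∑ j, ⟪g (x i), g (x j)⟫) ∂Q
        ≤ (1 / (ns:ℝ)) ^ 2 * ((ns:ℝ) * (M * B ^ 2 + ((ns:ℝ) - 1) * ‖μt‖ ^ 2)) :=
      mul_le_mul_of_nonneg_left hIsumij (by positivity)
    have h9 : ‖μt‖ ^ 2 - 2 * ((1 / (ns:ℝ)) * ((ns:ℝ) * ‖μt‖ ^ 2))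
        + (1 / (ns:ℝ)) ^ 2 * ((ns:ℝ) * (M * B ^ 2 + ((ns:ℝ) - 1) * ‖μt‖ ^ 2))
        = M * B ^ 2 / ns - ‖μt‖ ^ 2 / ns := by
      field_simp
      ring
    have h10 : (0:ℝ) ≤ ‖μt‖ ^ 2 / ns := by positivity
    linarith
  -- mean bound
  set m : ℝ := ∫ x, f x ∂Q with hmdef
  have hm0 : 0 ≤ m := integral_nonneg fun x => norm_nonneg _
  have hmsq : m ^ 2 ≤ ∫ x, f x ^ 2 ∂Q := by
    have h2 : (0:ℝ) ≤ ∫ x, (f x - m) ^ 2 ∂Q := integral_nonneg fun x => sq_nonneg _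
    have h3 : ∫ x, (f x - m) ^ 2 ∂Q = (∫ x, f x ^ 2 ∂Q) - m ^ 2 := by
      have h4 : ∀ x, (f x - m) ^ 2 = f x ^ 2 - 2 * m * f x + m ^ 2 := fun x => by ring
      have hintD : Integrable (fun x => f x ^ 2 - 2 * m * f x) Q := by
        exact hf2int.sub (hfint.const_mul (2*m))
      have hintE : Integrable (fun x => 2 * m * f x) Q := by
        exact hfint.const_mul (2*m)
      simp_rw [h4]
      rw [integral_add hintD (integrable_const (m^2)),
        integral_sub hf2int hintE, integral_const_mul, integral_const]
      simp [← hmdef]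
      ring
    linarith
  have hmean_le : m ≤ Real.sqrt (M * B ^ 2 / ns) := by
    calc m = Real.sqrt (m ^ 2) := (Real.sqrt_sq hm0).symm
      _ ≤ Real.sqrt (M * B ^ 2 / ns) := Real.sqrt_le_sqrt (hmsq.trans hf2)
  -- Chernoff
  set L : ℝ := Real.log (1 / δ) with hLdef
  have hL0 : 0 < L := Real.log_pos ((one_lt_div hδ0).2 hδ1)
  set r : ℝ := Real.sqrt (M * B ^ 2 / ns) with hrdef
  have hr0 : 0 < r := Real.sqrt_pos.2 (by positivity)
  set t' : ℝ := Real.sqrt (2 * L) * r with ht'def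
  have ht'0 : 0 < t' := mul_pos (Real.sqrt_pos.2 (by linarith)) hr0
  set lam : ℝ := 4 * t' / ((ns:ℝ) * d ^ 2) with hlamdef
  have hlam0 : 0 < lam := by positivity
  have hmgf := mcdiarmid_mgf Ps lam d C hlam0.le ns f hfm hfb hfosc
  rw [← hQ, ← hmdef] at hmgf
  have hexp_int : Integrable (fun x => Real.exp (lam * (f x - m))) Q := by
    refine int_of_bdd (((hfm.sub measurable_const).const_mul lam).exp).aestronglyMeasurable
      (C := Real.exp (lam * (C + |m|))) fun x => ?_
    rw [abs_of_pos (Real.exp_pos _)]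
    refine Real.exp_le_exp.2 (mul_le_mul_of_nonneg_left ?_ hlam0.le)
    have := hfb x
    have := le_abs_self (f x)
    have := neg_abs_le (f x)
    linarith [abs_nonneg m, neg_abs_le m, le_abs_self m]
  have hcher := ProbabilityTheory.measure_ge_le_exp_mul_mgf (X := fun x => f x - m)
    (μ := Q) (t := lam) t' hlam0.le hexp_int
  have hmgf_eq : ProbabilityTheory.mgf (fun x => f x - m) Q lam
      = ∫ x, Real.exp (lam * (f x - m)) ∂Q := rfl
  rw [hmgf_eq] at hcher
  -- exponent arithmetic
  have ht'sq : t' ^ 2 = 2 * L * (M * B ^ 2 / ns) := by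
    rw [ht'def, mul_pow, Real.sq_sqrt (by linarith : (0:ℝ) ≤ 2 * L), hrdef,
      Real.sq_sqrt (by positivity : (0:ℝ) ≤ M * B ^ 2 / ns)]
  have hdsq : d ^ 2 = 4 * (B ^ 2 * M) / (ns:ℝ) ^ 2 := by
    rw [hddef, div_pow, mul_pow, mul_pow, hsM2]
    ring
  have hexponent : -lam * t' + (ns:ℝ) * (lam ^ 2 * d ^ 2 / 8) = -L := by
    have hne : (ns:ℝ) ≠ 0 := hns0.ne'
    have hdne : d ≠ 0 := hd0.ne'
    have hMne : M ≠ 0 := hM.ne'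
    have hBne : B ≠ 0 := hB.ne'
    have h1 : lam * t' = 4 * t' ^ 2 / ((ns:ℝ) * d ^ 2) := by
      rw [hlamdef]; field_simp
    have h2 : (ns:ℝ) * (lam ^ 2 * d ^ 2 / 8) = 2 * t' ^ 2 / ((ns:ℝ) * d ^ 2) := by
      rw [hlamdef]; field_simp; ring
    have h3 : 2 * t' ^ 2 / ((ns:ℝ) * d ^ 2) = L := by
      rw [ht'sq, hdsq]; field_simp; ring
    have h4 : -(lam * t') + 2 * t' ^ 2 / ((ns:ℝ) * d ^ 2) = -L := by
      rw [h1]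
      have h5 : (4:ℝ) * t' ^ 2 / ((ns:ℝ) * d ^ 2)
          = 2 * (2 * t' ^ 2 / ((ns:ℝ) * d ^ 2)) := by ring
      rw [h5, h3]
      ring
    rw [neg_mul, h2, h4]
  have htail : Q {x | t' ≤ f x - m} ≤ ENNReal.ofReal δ := by
    have h1 : (Q {x | t' ≤ f x - m}).toReal ≤ δ := by
      refine hcher.trans ?_
      calc Real.exp (-lam * t') * ∫ x, Real.exp (lam * (f x - m)) ∂Q
          ≤ Real.exp (-lam * t') * Real.exp ((ns:ℝ) * (lam ^ 2 * d ^ 2 / 8)) :=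
            mul_le_mul_of_nonneg_left hmgf (Real.exp_pos _).le
        _ = Real.exp (-lam * t' + (ns:ℝ) * (lam ^ 2 * d ^ 2 / 8)) := (Real.exp_add _ _).symm
        _ = Real.exp (-L) := by rw [hexponent]
        _ = δ := by
            rw [hLdef, Real.exp_neg, Real.exp_log (by positivity : (0:ℝ) < 1/δ)]
            simp
    exact (ENNReal.le_ofReal_iff_toReal_le (measure_ne_top Q _) hδ0.le).2 h1
  -- ε bound
  have hεge : m + t' ≤ ε := by
    have h1 : r = Real.sqrt M * Real.sqrt (B ^ 2 / ns) := by
      rw [hrdef, ← Real.sqrt_mul hM.le]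
      congr 1
      ring
    have h2 : Real.sqrt (B ^ 2 / ns) ≤ Real.sqrt (B ^ 2 / ns + 1 / nt) :=
      Real.sqrt_le_sqrt (le_add_of_nonneg_right (by positivity))
    have h3 : r ≤ Real.sqrt M * (Real.sqrt (B ^ 2 / ns + 1 / nt) + Real.sqrt (1 / nt)) := by
      rw [h1]
      refine mul_le_mul_of_nonneg_left ?_ hsM.le
      have := Real.sqrt_nonneg (1 / (nt:ℝ))
      linarith
    have h4 : m + t' ≤ r * (1 + Real.sqrt (2 * L)) := by
      rw [ht'def]
      have h5 : r * (1 + Real.sqrt (2 * L)) = r + Real.sqrt (2 * L) * r := by ring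
      linarith [hmean_le]
    refine h4.trans ?_
    rw [hε, hLdef]
    refine mul_le_mul_of_nonneg_right h3 ?_
    have := Real.sqrt_nonneg (2 * Real.log (1/δ))
    linarith
  -- event set algebra
  set A : Set (Fin ns → X) := {x | f x ≤ ε} with hAdef
  have hAm : MeasurableSet A := measurableSet_le hfm measurable_const
  have hsub : Aᶜ ⊆ {x | t' ≤ f x - m} := by
    intro x hx
    simp only [hAdef, Set.mem_compl_iff, Set.mem_setOf_eq, not_le] at hx
    simp only [Set.mem_setOf_eq]
    linarith
  have hgoal_eq : {p : (Fin ns → X) × (Fin nt → X) |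
      ‖μt - (1 / (ns : ℝ)) • ∑ i, w (p.1 i) • φ (p.1 i)‖ ≤ ε} = A ×ˢ Set.univ := by
    ext p
    simp only [Set.mem_setOf_eq, Set.mem_prod, Set.mem_univ, and_true, hAdef, hfdef, hSdef, hgdef]
  rw [hgoal_eq, Measure.prod_prod, measure_univ, mul_one]
  calc ENNReal.ofReal (1 - 2 * δ) ≤ 1 - ENNReal.ofReal δ := by
        rcases le_or_gt (1 - 2 * δ) 0 with h | h
        · rw [ENNReal.ofReal_of_nonpos h]
          exact zero_le
        · calc ENNReal.ofReal (1 - 2 * δ) ≤ ENNReal.ofReal (1 - δ) :=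
                ENNReal.ofReal_le_ofReal (by linarith)
            _ = 1 - ENNReal.ofReal δ := by
                rw [ENNReal.ofReal_sub _ hδ0.le, ENNReal.ofReal_one]
    _ ≤ 1 - Q Aᶜ := tsub_le_tsub_left ((measure_mono hsub).trans htail) 1
    _ ≤ Q A := by
        rw [tsub_le_iff_right]
        calc (1:ℝ≥0∞) = Q Set.univ := measure_univ.symm
          _ = Q (A ∪ Aᶜ) := by rw [Set.union_compl_self]
          _ ≤ Q A + Q Aᶜ := measure_union_le _ _
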